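/- arXiv:1707.00477 — 5 statements merged into one kernel-verified Lean document; each statement's English description precedes it below -/
import Mathlib

section
/- Let n ≥ 4 be an even integer and let C be a locally optimal coloring of K_n. Then for every edge uv with C(uv) = i one has a_{u,i}(C) + a_{v,i}(C) ≤ 3. -/
open Finset

/-- A (not necessarily proper) coloring of the edges of `K_n` with the colors `{1, …, n-1}`
(modeled as `Fin (n-1)`).  The values on diagonal elements of `Sym2 (Fin n)` are irrelevant. -/
def EdgeColoring (n : ℕ) : Type := Sym2 (Fin n) → Fin (n - 1)

/-- `aCount C u μ` is the number of `μ`-colored edges of `C` incident with the vertex `u`. -/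
def aCount {n : ℕ} (C : EdgeColoring n) (u : Fin n) (μ : Fin (n - 1)) : ℕ :=
  (Finset.univ.filter (fun v : Fin n => v ≠ u ∧ C s(u, v) = μ)).card

/-- `Phi C = Σ_{u,μ} a_{u,μ}(C)²`. -/
def Phi {n : ℕ} (C : EdgeColoring n) : ℕ :=
  ∑ u : Fin n, ∑ μ : Fin (n - 1), (aCount C u μ) ^ 2

/-- `Psi C` is the number of unordered pairs of distinct incident edges of `K_n` receiving the
same color under `C` (counted as ordered pairs and divided by two). -/
def Psi {n : ℕ} (C : EdgeColoring n) : ℕ :=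
  ((Finset.univ : Finset (Sym2 (Fin n) × Sym2 (Fin n))).filter
    (fun p => ¬ p.1.IsDiag ∧ ¬ p.2.IsDiag ∧ p.1 ≠ p.2 ∧
      (∃ x : Fin n, x ∈ p.1 ∧ x ∈ p.2) ∧ C p.1 = C p.2)).card / 2

/-- `C'` differs from `C` on exactly one edge. -/
def DiffersOnOneEdge {n : ℕ} (C C' : EdgeColoring n) : Prop :=
  ∃ e : Sym2 (Fin n), ¬ e.IsDiag ∧ C' e ≠ C e ∧
    ∀ f : Sym2 (Fin n), ¬ f.IsDiag → f ≠ e → C' f = C f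

/-- A coloring is locally optimal if no single-edge recoloring decreases `Psi`. -/
def LocallyOptimal {n : ℕ} (C : EdgeColoring n) : Prop :=
  ∀ C' : EdgeColoring n, DiffersOnOneEdge C C' → Psi C ≤ Psi C'

/-- A one-factorization: a proper edge coloring of `K_n` with the `n-1` colors. -/
def IsOneFactorization {n : ℕ} (C : EdgeColoring n) : Prop :=
  ∀ e f : Sym2 (Fin n), ¬ e.IsDiag → ¬ f.IsDiag → e ≠ f →
    (∃ x : Fin n, x ∈ e ∧ x ∈ f) → C e ≠ C f

/-- The graph formed by the `μ`-colored edges of `C`. -/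
def monoGraph {n : ℕ} (C : EdgeColoring n) (μ : Fin (n - 1)) : SimpleGraph (Fin n) where
  Adj x y := x ≠ y ∧ C s(x, y) = μ
  symm := ⟨fun x y h => ⟨h.1.symm, by rw [Sym2.eq_swap]; exact h.2⟩⟩
  loopless := ⟨fun x h => h.1 rfl⟩

/-- An IV coloring: for every color `μ`, every connected component of the graph formed by the
`μ`-colored edges is either a single edge or a path with exactly two edges. -/
def IsIVColoring {n : ℕ} (C : EdgeColoring n) : Prop :=
  ∀ μ : Fin (n - 1), ∀ x : Fin n, (∃ y, (monoGraph C μ).Adj x y) →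
    (∃ u v : Fin n, (monoGraph C μ).Adj u v ∧
        {w | (monoGraph C μ).Reachable x w} = {u, v}) ∨
    (∃ u v w : Fin n, (monoGraph C μ).Adj u v ∧ (monoGraph C μ).Adj v w ∧
        u ≠ w ∧ ¬ (monoGraph C μ).Adj u w ∧
        {t | (monoGraph C μ).Reachable x t} = {u, v, w})

/-- `C'` is obtained from `C` by a `(u,v)`-flip. -/
def IsFlip {n : ℕ} (C C' : EdgeColoring n) (u v : Fin n) : Prop :=
  C' s(u, v) = C s(u, v) ∧
  (∀ e : Sym2 (Fin n), ¬ e.IsDiag → u ∉ e → v ∉ e → C' e = C e) ∧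
  ∀ w : Fin n, w ≠ u → w ≠ v →
    ((C' s(w, u) = C s(w, u) ∧ C' s(w, v) = C s(w, v)) ∨
     (C' s(w, u) = C s(w, v) ∧ C' s(w, v) = C s(w, u)))

/-- The edges of `K_n` with both endpoints in `S`. -/
def edgesIn {n : ℕ} (S : Finset (Fin n)) : Finset (Sym2 (Fin n)) :=
  Finset.univ.filter (fun e => ¬ e.IsDiag ∧ ∀ x : Fin n, x ∈ e → x ∈ S)

/-- `gammaColors C S`: the number of distinct colors on edges with both endpoints in `S`. -/
def gammaColors {n : ℕ} (C : EdgeColoring n) (S : Finset (Fin n)) : ℕ :=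
  ((edgesIn S).image C).card

/-- The deficit `D(S) = C(|S|, 2) - γ(S)`. -/
def deficit {n : ℕ} (C : EdgeColoring n) (S : Finset (Fin n)) : ℤ :=
  (Nat.choose S.card 2 : ℤ) - gammaColors C S

section Aux
variable {n : ℕ}

lemma sym2_rep {e : Sym2 (Fin n)} (he : ¬ e.IsDiag) {x : Fin n} (hx : x ∈ e) :
    ∃ y, y ≠ x ∧ e = s(x, y) := by
  revert he hx
  induction e using Sym2.ind with
  | _ a b =>
    intro he hx
    rw [Sym2.mk_isDiag_iff] at he
    rcases Sym2.mem_iff.mp hx with rfl | rfl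
    · exact ⟨b, fun h => he h.symm, rfl⟩
    · exact ⟨a, he, Sym2.eq_swap⟩

lemma common_unique {e f : Sym2 (Fin n)} (hef : e ≠ f) {x x' : Fin n}
    (h1 : x ∈ e) (h2 : x ∈ f) (h3 : x' ∈ e) (h4 : x' ∈ f) : x = x' := by
  by_contra hne
  exact hef (((Sym2.mem_and_mem_iff hne).mp ⟨h1, h3⟩).trans
    ((Sym2.mem_and_mem_iff hne).mp ⟨h2, h4⟩).symm)

def Nbr (C : EdgeColoring n) (x : Fin n) (μ : Fin (n - 1)) : Finset (Fin n) :=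
  Finset.univ.filter (fun y => y ≠ x ∧ C s(x, y) = μ)

lemma aCount_eq (C : EdgeColoring n) (x : Fin n) (μ : Fin (n - 1)) :
    aCount C x μ = (Nbr C x μ).card := rfl

lemma sum_aCount (C : EdgeColoring n) (x : Fin n) :
    ∑ μ : Fin (n - 1), aCount C x μ = n - 1 := by
  classical
  have h : (Finset.univ.filter (fun y : Fin n => y ≠ x)) =
      Finset.univ.biUnion (fun μ : Fin (n - 1) => Nbr C x μ) := by
    ext y
    simp only [mem_filter, mem_univ, true_and, mem_biUnion, Nbr]
    constructor
    · intro h; exact ⟨C s(x, y), h, rfl⟩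
    · rintro ⟨μ, hy, -⟩; exact hy
  have hd : ∀ μ ∈ (univ : Finset (Fin (n-1))), ∀ ν ∈ (univ : Finset (Fin (n-1))),
      μ ≠ ν → Disjoint (Nbr C x μ) (Nbr C x ν) := by
    intro μ _ ν _ hμν
    rw [Finset.disjoint_left]
    intro y hy hy'
    rw [Nbr, mem_filter] at hy hy'
    exact hμν (hy.2.2 ▸ hy'.2.2 ▸ rfl)
  have := Finset.card_biUnion hd
  rw [← h] at this
  rw [Finset.filter_ne' , Finset.card_erase_of_mem (mem_univ x), card_univ,
    Fintype.card_fin] at this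
  simp only [aCount_eq]
  omega

end Aux

section Aux2
variable {n : ℕ}

lemma mul_self_sub_self (a : ℕ) : a * a - a = a * (a - 1) := by
  cases a with
  | zero => rfl
  | succ k =>
    have h : (k + 1) * (k + 1) = (k + 1) * k + (k + 1) := by ring
    have h2 : k + 1 - 1 = k := rfl
    rw [h2, h]
    omega

def pairFinset (C : EdgeColoring n) : Finset (Sym2 (Fin n) × Sym2 (Fin n)) :=
  ((Finset.univ : Finset (Sym2 (Fin n) × Sym2 (Fin n))).filter
    (fun p => ¬ p.1.IsDiag ∧ ¬ p.2.IsDiag ∧ p.1 ≠ p.2 ∧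
      (∃ x : Fin n, x ∈ p.1 ∧ x ∈ p.2) ∧ C p.1 = C p.2))

lemma Psi_eq (C : EdgeColoring n) : Psi C = (pairFinset C).card / 2 := rfl

def tripleFinset (C : EdgeColoring n) : Finset ((_ : Fin n) × Fin n × Fin n) :=
  Finset.univ.sigma (fun x => Finset.univ.biUnion
    (fun μ : Fin (n - 1) => (Nbr C x μ).offDiag))

lemma mem_tripleFinset {C : EdgeColoring n} {x y z : Fin n} :
    (⟨x, y, z⟩ : (_ : Fin n) × Fin n × Fin n) ∈ tripleFinset C ↔
      y ≠ x ∧ z ≠ x ∧ y ≠ z ∧ C s(x, y) = C s(x, z) := by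
  unfold tripleFinset Nbr
  rw [Finset.mem_sigma, Finset.mem_biUnion]
  dsimp only
  constructor
  · rintro ⟨-, μ, -, hm⟩
    rw [Finset.mem_offDiag] at hm
    obtain ⟨h1, h2, h3⟩ := hm
    rw [Finset.mem_filter] at h1 h2
    exact ⟨h1.2.1, h2.2.1, h3, h1.2.2.trans h2.2.2.symm⟩
  · rintro ⟨hy, hz, hyz, hc⟩
    refine ⟨Finset.mem_univ _, C s(x, y), Finset.mem_univ _, ?_⟩
    rw [Finset.mem_offDiag]
    exact ⟨Finset.mem_filter.mpr ⟨Finset.mem_univ _, hy, rfl⟩,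
      Finset.mem_filter.mpr ⟨Finset.mem_univ _, hz, hc.symm⟩, hyz⟩

lemma card_tripleFinset (C : EdgeColoring n) :
    (tripleFinset C).card
      = ∑ x : Fin n, ∑ μ : Fin (n - 1), aCount C x μ * (aCount C x μ - 1) := by
  rw [tripleFinset, Finset.card_sigma]
  refine Finset.sum_congr rfl fun x _ => ?_
  rw [Finset.card_biUnion]
  · refine Finset.sum_congr rfl fun μ _ => ?_
    rw [Finset.offDiag_card, aCount_eq]
    exact mul_self_sub_self _
  · intro μ _ ν _ hμν
    rw [Function.onFun, Finset.disjoint_left]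
    rintro ⟨y, z⟩ hy hy'
    rw [Finset.mem_offDiag] at hy hy'
    have h1 := (Finset.mem_filter.mp hy.1).2.2
    have h2 := (Finset.mem_filter.mp hy'.1).2.2
    exact hμν (h1 ▸ h2 ▸ rfl)

lemma card_pairFinset (C : EdgeColoring n) :
    (pairFinset C).card
      = ∑ x : Fin n, ∑ μ : Fin (n - 1), aCount C x μ * (aCount C x μ - 1) := by
  rw [← card_tripleFinset]
  symm
  apply Finset.card_bij (fun t _ => ((s(t.1, t.2.1), s(t.1, t.2.2)) :
    Sym2 (Fin n) × Sym2 (Fin n)))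
  · rintro ⟨x, y, z⟩ ht
    dsimp only
    rw [mem_tripleFinset] at ht
    obtain ⟨hy, hz, hyz, hc⟩ := ht
    rw [pairFinset, Finset.mem_filter]
    refine ⟨Finset.mem_univ _, ?_, ?_, ?_, ⟨x, ?_, ?_⟩, hc⟩
    · rw [Sym2.mk_isDiag_iff]; exact fun h => hy h.symm
    · rw [Sym2.mk_isDiag_iff]; exact fun h => hz h.symm
    · rw [Ne, Sym2.eq_iff]
      rintro (⟨-, rfl⟩ | ⟨rfl, -⟩)
      · exact hyz rfl
      · exact hz rfl
    · exact Sym2.mem_mk_left _ _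
    · exact Sym2.mem_mk_left _ _
  · rintro ⟨x, y, z⟩ ht ⟨x', y', z'⟩ ht' heq
    dsimp only at heq ⊢
    rw [mem_tripleFinset] at ht ht'
    obtain ⟨hy, hz, hyz, hc⟩ := ht
    obtain ⟨hy', hz', hyz', hc'⟩ := ht'
    have h1 : s(x, y) = s(x', y') := congrArg Prod.fst heq
    have h2 : s(x, z) = s(x', z') := congrArg Prod.snd heq
    have hef : s(x, y) ≠ s(x, z) := by
      rw [Ne, Sym2.eq_iff]
      rintro (⟨-, rfl⟩ | ⟨rfl, -⟩)
      · exact hyz rfl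
      · exact hz rfl
    have hxx : x = x' := by
      apply common_unique hef (Sym2.mem_mk_left _ _) (Sym2.mem_mk_left _ _)
      · rw [h1]; exact Sym2.mem_mk_left _ _
      · rw [h2]; exact Sym2.mem_mk_left _ _
    subst hxx
    have hyy : y = y' := by
      rcases Sym2.eq_iff.mp h1 with ⟨-, h⟩ | ⟨h, -⟩
      · exact h
      · exact absurd h.symm hy'
    have hzz : z = z' := by
      rcases Sym2.eq_iff.mp h2 with ⟨-, h⟩ | ⟨h, -⟩
      · exact h
      · exact absurd h.symm hz'
    rw [hyy, hzz]
  · rintro ⟨e, f⟩ hp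
    rw [pairFinset, Finset.mem_filter] at hp
    obtain ⟨-, he, hf, hef, ⟨x, hx1, hx2⟩, hc⟩ := hp
    obtain ⟨y, hy, rfl⟩ := sym2_rep he hx1
    obtain ⟨z, hz, rfl⟩ := sym2_rep hf hx2
    have hyz : y ≠ z := fun h => hef (by rw [h])
    exact ⟨⟨x, y, z⟩, mem_tripleFinset.mpr ⟨hy, hz, hyz, hc⟩, rfl⟩

end Aux2

section Aux3
variable {n : ℕ}

def recolor (C : EdgeColoring n) (u v : Fin n) (j : Fin (n - 1)) : EdgeColoring n :=
  fun e => if e = s(u, v) then j else C e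

lemma recolor_swap (C : EdgeColoring n) (u v : Fin n) (j : Fin (n - 1)) :
    recolor C u v j = recolor C v u j := by
  funext e
  unfold recolor
  rw [show s(u, v) = s(v, u) from Sym2.eq_swap]

lemma sym2_uv_iff {u v t : Fin n} (huv : u ≠ v) : s(u, t) = s(u, v) ↔ t = v := by
  rw [Sym2.eq_iff]
  constructor
  · rintro (⟨-, h⟩ | ⟨h, -⟩)
    · exact h
    · exact absurd h huv
  · intro h; exact Or.inl ⟨rfl, h⟩

lemma aCount_recolor_other (C : EdgeColoring n) {u v : Fin n} (j : Fin (n - 1))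
    {w : Fin n} (hw : w ≠ u) (hw' : w ≠ v) (μ : Fin (n - 1)) :
    aCount (recolor C u v j) w μ = aCount C w μ := by
  unfold aCount
  congr 1
  ext t
  have h : s(w, t) ≠ s(u, v) := by
    rw [Ne, Sym2.eq_iff]
    rintro (⟨rfl, -⟩ | ⟨rfl, -⟩)
    · exact hw rfl
    · exact hw' rfl
  simp only [Finset.mem_filter, Finset.mem_univ, true_and]
  simp [recolor, h]

lemma aCount_recolor_ne (C : EdgeColoring n) {u v : Fin n} (huv : u ≠ v)
    {i j : Fin (n - 1)} (hi : C s(u, v) = i) {μ : Fin (n - 1)}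
    (hμi : μ ≠ i) (hμj : μ ≠ j) :
    aCount (recolor C u v j) u μ = aCount C u μ := by
  unfold aCount
  congr 1
  ext t
  by_cases htv : t = v
  · subst htv
    simp [recolor, sym2_uv_iff huv, hi, Ne.symm hμj, Ne.symm hμi]
  · simp only [Finset.mem_filter, Finset.mem_univ, true_and]
    simp [recolor, (sym2_uv_iff huv).not.mpr htv]

lemma aCount_recolor_old (C : EdgeColoring n) {u v : Fin n} (huv : u ≠ v)
    {i j : Fin (n - 1)} (hi : C s(u, v) = i) (hij : j ≠ i) :
    aCount (recolor C u v j) u i = aCount C u i - 1 := by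
  unfold aCount
  have key : (Finset.univ.filter (fun t : Fin n => t ≠ u ∧ recolor C u v j s(u, t) = i))
      = (Finset.univ.filter (fun t : Fin n => t ≠ u ∧ C s(u, t) = i)).erase v := by
    ext t
    rw [Finset.mem_erase, Finset.mem_filter, Finset.mem_filter]
    by_cases htv : t = v
    · subst htv
      simp [recolor, sym2_uv_iff huv, hij]
    · simp [recolor, (sym2_uv_iff huv).not.mpr htv, htv]
  rw [key, Finset.card_erase_of_mem]
  rw [Finset.mem_filter]
  exact ⟨Finset.mem_univ _, Ne.symm huv, hi⟩

lemma aCount_recolor_new (C : EdgeColoring n) {u v : Fin n} (huv : u ≠ v)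
    {i j : Fin (n - 1)} (hi : C s(u, v) = i) (hij : j ≠ i) :
    aCount (recolor C u v j) u j = aCount C u j + 1 := by
  unfold aCount
  have key : (Finset.univ.filter (fun t : Fin n => t ≠ u ∧ recolor C u v j s(u, t) = j))
      = insert v (Finset.univ.filter (fun t : Fin n => t ≠ u ∧ C s(u, t) = j)) := by
    ext t
    rw [Finset.mem_insert, Finset.mem_filter]
    by_cases htv : t = v
    · subst htv
      simp [recolor, sym2_uv_iff huv, Ne.symm huv]
    · simp [recolor, (sym2_uv_iff huv).not.mpr htv, htv]
  rw [key, Finset.card_insert_of_notMem]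
  rw [Finset.mem_filter]
  rintro ⟨-, -, h⟩
  rw [hi] at h
  exact hij h.symm

lemma one_le_aCount (C : EdgeColoring n) {u v : Fin n} (huv : u ≠ v)
    {i : Fin (n - 1)} (hi : C s(u, v) = i) : 1 ≤ aCount C u i := by
  rw [aCount]
  exact Finset.card_pos.mpr ⟨v, Finset.mem_filter.mpr ⟨Finset.mem_univ _, Ne.symm huv, hi⟩⟩

end Aux3

section Aux4
variable {n : ℕ}

lemma cast_mul_sub (a : ℕ) : ((a * (a - 1) : ℕ) : ℤ) = (a : ℤ) ^ 2 - a := by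
  cases a with
  | zero => simp
  | succ k => push_cast [Nat.succ_sub_one]; ring

lemma pair_card_int (C : EdgeColoring n) :
    ((pairFinset C).card : ℤ)
      = ∑ x : Fin n, ∑ μ : Fin (n - 1), ((aCount C x μ : ℤ) ^ 2 - aCount C x μ) := by
  rw [card_pairFinset, Nat.cast_sum]
  refine Finset.sum_congr rfl fun x _ => ?_
  rw [Nat.cast_sum]
  exact Finset.sum_congr rfl fun μ _ => cast_mul_sub _

lemma sum_g_recolor (C : EdgeColoring n) {u v : Fin n} (huv : u ≠ v)
    {i j : Fin (n - 1)} (hi : C s(u, v) = i) (hij : j ≠ i) :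
    ∑ μ : Fin (n - 1),
        ((aCount (recolor C u v j) u μ : ℤ) ^ 2 - aCount (recolor C u v j) u μ)
      = (∑ μ : Fin (n - 1), ((aCount C u μ : ℤ) ^ 2 - aCount C u μ))
        + (2 * aCount C u j - 2 * aCount C u i + 2) := by
  have hA : 1 ≤ aCount C u i := one_le_aCount C huv hi
  have h1 := aCount_recolor_old C huv hi hij
  have h2 := aCount_recolor_new C huv hi hij
  have key : ∑ μ : Fin (n - 1),
      (((aCount (recolor C u v j) u μ : ℤ) ^ 2 - aCount (recolor C u v j) u μ)
        - ((aCount C u μ : ℤ) ^ 2 - aCount C u μ))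
      = 2 * aCount C u j - 2 * aCount C u i + 2 := by
    rw [← Finset.sum_subset (Finset.subset_univ ({i, j} : Finset (Fin (n - 1))))]
    · rw [Finset.sum_pair (Ne.symm hij), h1, h2, Nat.cast_sub hA]
      push_cast
      ring
    · intro μ _ hμ
      simp only [Finset.mem_insert, Finset.mem_singleton] at hμ
      push_neg at hμ
      rw [aCount_recolor_ne C huv hi hμ.1 hμ.2]
      ring
  rw [Finset.sum_sub_distrib] at key
  linarith

end Aux4


/-- In a locally optimal coloring, every edge `uv` of color `i` satisfies
`a_{u,i} + a_{v,i} ≤ 3`. -/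
theorem locally_optimal_sum_le_three (n : ℕ) (hn : Even n) (h4 : 4 ≤ n)
    (C : EdgeColoring n) (hC : LocallyOptimal C)
    (u v : Fin n) (huv : u ≠ v) (i : Fin (n - 1)) (hi : C s(u, v) = i) :
    aCount C u i + aCount C v i ≤ 3 := by
  by_contra hcon
  push_neg at hcon
  have hvu : C s(v, u) = i := by rw [Sym2.eq_swap]; exact hi
  have hsum : ∑ μ : Fin (n - 1), (aCount C u μ + aCount C v μ) = (n - 1) + (n - 1) := by
    rw [Finset.sum_add_distrib, sum_aCount, sum_aCount]
  have hex : ∃ j : Fin (n - 1), j ≠ i ∧ aCount C u j + aCount C v j ≤ 1 := by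
    by_contra hno
    push_neg at hno
    have h2 : ∀ μ ∈ (univ : Finset (Fin (n - 1))).erase i,
        2 ≤ aCount C u μ + aCount C v μ :=
      fun μ hμ => hno μ (Finset.ne_of_mem_erase hμ)
    have h3 : 2 * ((univ : Finset (Fin (n - 1))).erase i).card
        ≤ ∑ μ ∈ (univ : Finset (Fin (n - 1))).erase i, (aCount C u μ + aCount C v μ) := by
      have := Finset.sum_le_sum h2
      rwa [Finset.sum_const, smul_eq_mul, mul_comm] at this
    have h4' := Finset.sum_erase_add (univ : Finset (Fin (n - 1)))
      (fun μ => aCount C u μ + aCount C v μ) (Finset.mem_univ i)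
    rw [hsum] at h4'
    have h5 : ((univ : Finset (Fin (n - 1))).erase i).card = n - 2 := by
      rw [Finset.card_erase_of_mem (Finset.mem_univ i), Finset.card_univ, Fintype.card_fin]
      omega
    omega
  obtain ⟨j, hji, hj⟩ := hex
  have hdiff : DiffersOnOneEdge C (recolor C u v j) := by
    refine ⟨s(u, v), ?_, ?_, ?_⟩
    · rw [Sym2.mk_isDiag_iff]; exact huv
    · show recolor C u v j s(u, v) ≠ C s(u, v)
      unfold recolor
      rw [if_pos rfl, hi]
      exact hji
    · intro f _ hf
      show recolor C u v j f = C f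
      unfold recolor
      rw [if_neg hf]
  have hpsi := hC _ hdiff
  rw [Psi_eq, Psi_eq] at hpsi
  have hcard : (pairFinset C).card ≤ (pairFinset (recolor C u v j)).card + 1 := by omega
  have hint : ((pairFinset C).card : ℤ)
      ≤ ((pairFinset (recolor C u v j)).card : ℤ) + 1 := by exact_mod_cast hcard
  rw [pair_card_int, pair_card_int] at hint
  -- inner sums
  have hu := sum_g_recolor C huv hi hji
  have hv : ∑ μ : Fin (n - 1),
        ((aCount (recolor C u v j) v μ : ℤ) ^ 2 - aCount (recolor C u v j) v μ)
      = (∑ μ : Fin (n - 1), ((aCount C v μ : ℤ) ^ 2 - aCount C v μ))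
        + (2 * aCount C v j - 2 * aCount C v i + 2) := by
    rw [recolor_swap]
    exact sum_g_recolor C (Ne.symm huv) hvu hji
  have hsplit : ∑ x : Fin n, (
        (∑ μ : Fin (n - 1), ((aCount (recolor C u v j) x μ : ℤ) ^ 2 - aCount (recolor C u v j) x μ))
        - (∑ μ : Fin (n - 1), ((aCount C x μ : ℤ) ^ 2 - aCount C x μ)))
      = (2 * aCount C u j - 2 * aCount C u i + 2)
        + (2 * aCount C v j - 2 * aCount C v i + 2) := by
    rw [← Finset.sum_subset (Finset.subset_univ ({u, v} : Finset (Fin n)))]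
    · rw [Finset.sum_pair huv, hu, hv]
      ring
    · intro x _ hx
      simp only [Finset.mem_insert, Finset.mem_singleton] at hx
      push_neg at hx
      have : ∀ μ : Fin (n - 1), aCount (recolor C u v j) x μ = aCount C x μ :=
        fun μ => aCount_recolor_other C j hx.1 hx.2 μ
      rw [Finset.sum_congr rfl (fun μ _ => by rw [this μ])]
      ring
  rw [Finset.sum_sub_distrib] at hsplit
  have hjZ : (aCount C u j : ℤ) + (aCount C v j : ℤ) ≤ 1 := by exact_mod_cast hj
  have hconZ : (3 : ℤ) < (aCount C u i : ℤ) + (aCount C v i : ℤ) := by exact_mod_cast hcon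
  linarith
end

section
/- Let n ≥ 2 be an even integer, let C be an IV coloring of K_n, and let α be a color such that the α-colored edges form exactly one Vee (together with a possibly empty collection of disjoint single edges). Then there exists a vertex x incident with no α-colored edge, and every such vertex x is the center of a Vee of some color γ ≠ α. -/
open Finset

lemma aCount_le_two {n : ℕ} (C : EdgeColoring n) (hC : IsIVColoring C) (u : Fin n)
    (μ : Fin (n - 1)) : aCount C u μ ≤ 2 := by
  by_contra h
  push_neg at h
  rw [aCount] at h
  obtain ⟨a, b, c, ha, hb, hc, hab, hac, hbc⟩ := Finset.two_lt_card_iff.mp h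
  simp only [Finset.mem_filter, Finset.mem_univ, true_and] at ha hb hc
  have h1 : (monoGraph C μ).Adj u a := ⟨Ne.symm ha.1, ha.2⟩
  have h2 : (monoGraph C μ).Adj u b := ⟨Ne.symm hb.1, hb.2⟩
  have h3 : (monoGraph C μ).Adj u c := ⟨Ne.symm hc.1, hc.2⟩
  have memset : ∀ (S : Set (Fin n)), {w | (monoGraph C μ).Reachable u w} = S →
      u ∈ S ∧ a ∈ S ∧ b ∈ S ∧ c ∈ S := by
    intro S hS
    refine ⟨?_, ?_, ?_, ?_⟩ <;> rw [← hS]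
    · exact SimpleGraph.Reachable.refl u
    · exact h1.reachable
    · exact h2.reachable
    · exact h3.reachable
  rcases hC μ u ⟨a, h1⟩ with ⟨p, q, _, hset⟩ | ⟨p, q, r, _, _, _, _, hset⟩
  · obtain ⟨mu, ma, mb, mc⟩ := memset _ hset
    simp only [Set.mem_insert_iff, Set.mem_singleton_iff] at mu ma mb mc
    have nua : u ≠ a := Ne.symm ha.1
    have nub : u ≠ b := Ne.symm hb.1
    rcases mu with hu1 | hu1 <;> rcases ma with ha1 | ha1 <;> rcases mb with hb1 | hb1 <;>
      simp_all
  · obtain ⟨mu, ma, mb, mc⟩ := memset _ hset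
    simp only [Set.mem_insert_iff, Set.mem_singleton_iff] at mu ma mb mc
    have nua : u ≠ a := Ne.symm ha.1
    have nub : u ≠ b := Ne.symm hb.1
    have nuc : u ≠ c := Ne.symm hc.1
    rcases mu with hu1 | hu1 | hu1 <;> rcases ma with ha1 | ha1 | ha1 <;>
      rcases mb with hb1 | hb1 | hb1 <;> rcases mc with hc1 | hc1 | hc1 <;>
      simp_all

lemma sum_aCount_even {n : ℕ} (C : EdgeColoring n) (α : Fin (n - 1)) :
    Even (∑ u : Fin n, aCount C u α) := by
  classical
  set T : Finset (Fin n × Fin n) :=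
    Finset.univ.filter (fun p : Fin n × Fin n => p.1 ≠ p.2 ∧ C s(p.1, p.2) = α) with hT
  have hsum : ∑ u : Fin n, aCount C u α = T.card := by
    rw [Finset.card_eq_sum_card_fiberwise (f := Prod.fst) (t := Finset.univ)
      (fun p _ => Finset.mem_univ _)]
    refine Finset.sum_congr rfl (fun u _ => ?_)
    rw [aCount]
    apply Finset.card_bij' (i := fun v _ => (u, v)) (j := fun p _ => p.2)
    · intro v hv
      simp only [hT, Finset.mem_filter, Finset.mem_univ, true_and] at hv ⊢
      exact ⟨⟨Ne.symm hv.1, hv.2⟩, trivial⟩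
    · intro p hp
      simp only [hT, Finset.mem_filter, Finset.mem_univ, true_and] at hp ⊢
      obtain ⟨⟨h1, h2⟩, h3⟩ := hp
      subst h3
      exact ⟨Ne.symm h1, h2⟩
    · intro v hv; rfl
    · intro p hp
      simp only [hT, Finset.mem_filter, Finset.mem_univ, true_and] at hp
      obtain ⟨_, h3⟩ := hp
      rw [← h3]
  rw [hsum]
  have hsplit : T.card = (T.filter (fun p => p.1 < p.2)).card +
      (T.filter (fun p => ¬ p.1 < p.2)).card :=
    (Finset.card_filter_add_card_filter_not _).symm
  have heq : (T.filter (fun p => ¬ p.1 < p.2)).card =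
      (T.filter (fun p => p.1 < p.2)).card := by
    apply Finset.card_nbij (i := Prod.swap)
    · intro p hp
      simp only [hT, Finset.mem_coe, Finset.mem_filter, Finset.mem_univ, true_and] at hp ⊢
      obtain ⟨⟨h1, h2⟩, h3⟩ := hp
      refine ⟨⟨Ne.symm h1, ?_⟩, lt_of_le_of_ne (not_lt.mp h3) (Ne.symm h1)⟩
      rwa [Sym2.eq_swap]
    · exact fun a _ b _ hab => Prod.swap_injective hab
    · intro p hp
      simp only [hT, Finset.coe_filter, Finset.mem_filter, Finset.mem_univ, true_and,
        Set.mem_setOf_eq, Set.mem_image] at hp ⊢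
      obtain ⟨⟨h1, h2⟩, h3⟩ := hp
      refine ⟨p.swap, ⟨⟨Ne.symm h1, by rwa [Sym2.eq_swap]⟩, not_lt.mpr (le_of_lt h3)⟩, by simp⟩
  exact ⟨(T.filter (fun p => p.1 < p.2)).card, by omega⟩


/-- If `C` is an IV coloring and the `α`-colored edges form exactly one Vee
(together with a possibly empty collection of disjoint single edges) — i.e. exactly one vertex is
the center of an `α`-Vee — then some vertex is incident with no `α`-colored edge, and every such
vertex is the center of a Vee of some color `γ ≠ α`. -/
theorem missing_color_vertex_is_center (n : ℕ) (hn : Even n) (h2 : 2 ≤ n)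
    (C : EdgeColoring n) (hC : IsIVColoring C) (α : Fin (n - 1))
    (hone : (Finset.univ.filter (fun u : Fin n => 2 ≤ aCount C u α)).card = 1) :
    (∃ x : Fin n, aCount C x α = 0) ∧
    ∀ x : Fin n, aCount C x α = 0 →
      ∃ γ : Fin (n - 1), γ ≠ α ∧ ∃ y z : Fin n, y ≠ z ∧ y ≠ x ∧ z ≠ x ∧
        C s(x, y) = γ ∧ C s(x, z) = γ := by
    classical
  have hfz : ∀ x : Fin n, aCount C x α = 0 → ∀ v : Fin n, v ≠ x → C s(x, v) ≠ α := by
    intro x hx v hv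
    rw [aCount, Finset.card_eq_zero] at hx
    intro hcol
    have hm : v ∈ (Finset.univ.filter (fun v : Fin n => v ≠ x ∧ C s(x, v) = α)) := by
      simp [hv, hcol]
    rw [hx] at hm
    exact absurd hm (Finset.notMem_empty v)
  constructor
  · by_contra hno
    push_neg at hno
    obtain ⟨v₀, hv₀⟩ := Finset.card_eq_one.mp hone
    have hv₀mem : v₀ ∈ Finset.univ.filter (fun u : Fin n => 2 ≤ aCount C u α) := by
      rw [hv₀]; exact Finset.mem_singleton_self v₀
    have hv₀2 : aCount C v₀ α = 2 := by
      have h1 := (Finset.mem_filter.mp hv₀mem).2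
      have h2 := aCount_le_two C hC v₀ α
      omega
    have hothers : ∀ u : Fin n, u ≠ v₀ → aCount C u α = 1 := by
      intro u hu
      have hnm : u ∉ Finset.univ.filter (fun u : Fin n => 2 ≤ aCount C u α) := by
        rw [hv₀]; simp [hu]
      simp only [Finset.mem_filter, Finset.mem_univ, true_and, not_le] at hnm
      have := hno u
      omega
    have hsum : ∑ u : Fin n, aCount C u α = 2 + (n - 1) := by
      rw [← Finset.add_sum_erase Finset.univ _ (Finset.mem_univ v₀), hv₀2]
      congr 1
      rw [Finset.sum_congr rfl (fun u hu => hothers u (Finset.ne_of_mem_erase hu))]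
      simp [Finset.card_erase_of_mem]
    have heven := sum_aCount_even C α
    rw [hsum] at heven
    rw [Nat.even_iff] at heven hn
    omega
  · intro x hx
    have hcard : ((Finset.univ : Finset (Fin (n - 1))).erase α).card <
        ((Finset.univ : Finset (Fin n)).erase x).card := by
      rw [Finset.card_erase_of_mem (Finset.mem_univ _),
        Finset.card_erase_of_mem (Finset.mem_univ _)]
      simp only [Finset.card_univ, Fintype.card_fin]
      omega
    have hmaps : ∀ v ∈ (Finset.univ : Finset (Fin n)).erase x,
        C s(x, v) ∈ (Finset.univ : Finset (Fin (n - 1))).erase α := by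
      intro v hv
      exact Finset.mem_erase.mpr ⟨hfz x hx v (Finset.ne_of_mem_erase hv), Finset.mem_univ _⟩
    obtain ⟨y, hy, z, hz, hyz, hcyz⟩ :=
      Finset.exists_ne_map_eq_of_card_lt_of_maps_to hcard hmaps
    refine ⟨C s(x, y), hfz x hx y (Finset.ne_of_mem_erase hy), y, z, hyz,
      Finset.ne_of_mem_erase hy, Finset.ne_of_mem_erase hz, rfl, hcyz.symm⟩
end

section
/- Let n ≥ 2 be an even integer, let C be a coloring of K_n, and let u, v be distinct vertices such that |a_{u,λ}(C) − a_{v,λ}(C)| ≥ 2 for some color λ. Then there exists a coloring C' obtained from C by a (u,v)-flip such that Φ(C') < Φ(C). -/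
open Finset

section Aux
variable {n : ℕ}

/-- auxiliary function for the flipped coloring -/
def flipAux (C : EdgeColoring n) (u v : Fin n) (S : Finset (Fin n)) (x y : Fin n) :
    Fin (n - 1) :=
  if x ∈ S ∧ (y = u ∨ y = v) then C s(x, if y = u then v else u)
  else if y ∈ S ∧ (x = u ∨ x = v) then C s(y, if x = u then v else u)
  else C s(x, y)

lemma flipAux_symm (C : EdgeColoring n) (u v : Fin n) (S : Finset (Fin n))
    (hu : u ∉ S) (hv : v ∉ S) (x y : Fin n) :
    flipAux C u v S x y = flipAux C u v S y x := by
  unfold flipAux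
  by_cases h1 : x ∈ S ∧ (y = u ∨ y = v) <;> by_cases h2 : y ∈ S ∧ (x = u ∨ x = v)
  · exfalso; rcases h1.2 with h | h <;> rcases h2.2 with h' | h' <;>
      simp_all
  · simp [h1, h2]
  · simp [h1, h2]
  · simp only [h1, h2, if_neg, if_false]
    rw [Sym2.eq_swap]

/-- The coloring obtained from `C` by flipping the vertices of `S` with respect to `u,v`. -/
def flipOn (C : EdgeColoring n) (u v : Fin n) (S : Finset (Fin n))
    (hu : u ∉ S) (hv : v ∉ S) : EdgeColoring n :=
  Sym2.lift ⟨fun x y => flipAux C u v S x y, flipAux_symm C u v S hu hv⟩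

variable {C : EdgeColoring n} {u v : Fin n} {S : Finset (Fin n)} {hu : u ∉ S} {hv : v ∉ S}

lemma flipOn_mk (x y : Fin n) : flipOn C u v S hu hv s(x, y) = flipAux C u v S x y := rfl

lemma flipOn_uv : flipOn C u v S hu hv s(u, v) = C s(u, v) := by
  rw [flipOn_mk]; unfold flipAux; simp [hu, hv]

lemma flipOn_notmem {x y : Fin n} (hx : x ≠ u) (hx' : x ≠ v) (hy : y ≠ u) (hy' : y ≠ v) :
    flipOn C u v S hu hv s(x, y) = C s(x, y) := by
  rw [flipOn_mk]; unfold flipAux; simp [hx, hx', hy, hy']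

lemma flipOn_wu_mem {w : Fin n} (hw : w ∈ S) :
    flipOn C u v S hu hv s(w, u) = C s(w, v) := by
  rw [flipOn_mk]; unfold flipAux; simp [hw]

lemma flipOn_wv_mem (huv : u ≠ v) {w : Fin n} (hw : w ∈ S) :
    flipOn C u v S hu hv s(w, v) = C s(w, u) := by
  rw [flipOn_mk]; unfold flipAux; simp [hw, huv.symm]

lemma flipOn_wu_not {w : Fin n} (hw : w ∉ S) :
    flipOn C u v S hu hv s(w, u) = C s(w, u) := by
  rw [flipOn_mk]; unfold flipAux; simp [hw, hu]

lemma flipOn_wv_not {w : Fin n} (hw : w ∉ S) :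
    flipOn C u v S hu hv s(w, v) = C s(w, v) := by
  rw [flipOn_mk]; unfold flipAux; simp [hw, hv]

lemma isFlip_flipOn (huv : u ≠ v) : IsFlip C (flipOn C u v S hu hv) u v := by
  refine ⟨flipOn_uv, ?_, ?_⟩
  · intro e
    induction e using Sym2.ind with
    | _ x y =>
      intro _ hue hve
      rw [Sym2.mem_iff] at hue hve
      push_neg at hue hve
      exact flipOn_notmem (Ne.symm hue.1) (Ne.symm hve.1) (Ne.symm hue.2) (Ne.symm hve.2)
  · intro w hwu hwv
    by_cases hw : w ∈ S
    · exact Or.inr ⟨flipOn_wu_mem hw, flipOn_wv_mem huv hw⟩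
    · exact Or.inl ⟨flipOn_wu_not hw, flipOn_wv_not hw⟩

end Aux
section Count
variable {n : ℕ} (C : EdgeColoring n) (u v : Fin n) (S : Finset (Fin n))

/-- number of vertices of `S` whose edge to `u` has color `ρ` (as an integer) -/
def cntTo (u : Fin n) (ρ : Fin (n - 1)) : ℤ :=
  ∑ w ∈ S, if C s(w, u) = ρ then 1 else 0

lemma aCount_cast (x : Fin n) (μ : Fin (n - 1)) :
    (aCount C x μ : ℤ) = ∑ y : Fin n, if y ≠ x ∧ C s(x, y) = μ then 1 else 0 := by
  rw [aCount, Finset.card_filter]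
  push_cast
  exact Finset.sum_congr rfl (fun y _ => by split_ifs <;> simp)

lemma cntTo_eq (x : Fin n) (ρ : Fin (n - 1)) :
    cntTo C S x ρ = ∑ w : Fin n, if w ∈ S then (if C s(w, x) = ρ then (1:ℤ) else 0) else 0 := by
  rw [cntTo, Finset.sum_ite_mem, Finset.univ_inter]

variable {C u v S}

lemma key_u (huv : u ≠ v) (hu : u ∉ S) (hv : v ∉ S) (μ : Fin (n - 1)) :
    (aCount (flipOn C u v S hu hv) u μ : ℤ) + cntTo C S u μ
      = (aCount C u μ : ℤ) + cntTo C S v μ := by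
  rw [aCount_cast, aCount_cast, cntTo_eq, cntTo_eq, ← Finset.sum_add_distrib,
    ← Finset.sum_add_distrib]
  refine Finset.sum_congr rfl (fun y _ => ?_)
  by_cases hy : y ∈ S
  · have hyu : y ≠ u := fun h => hu (h ▸ hy)
    have h1 : flipOn C u v S hu hv s(u, y) = C s(y, v) := by
      rw [Sym2.eq_swap]; exact flipOn_wu_mem hy
    rw [h1, if_pos hy, if_pos hy, show s(u,y) = s(y,u) from Sym2.eq_swap]
    simp only [hyu, true_and, ne_eq, not_false_eq_true]
    exact add_comm _ _
  · have h1 : flipOn C u v S hu hv s(u, y) = C s(u, y) := by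
      by_cases hyv : y = v
      · subst hyv; exact flipOn_uv
      · rw [Sym2.eq_swap, show s(y,u) = _ from rfl]
        rw [flipOn_wu_not hy, Sym2.eq_swap]
    rw [h1, if_neg hy, if_neg hy]

lemma key_v (huv : u ≠ v) (hu : u ∉ S) (hv : v ∉ S) (μ : Fin (n - 1)) :
    (aCount (flipOn C u v S hu hv) v μ : ℤ) + cntTo C S v μ
      = (aCount C v μ : ℤ) + cntTo C S u μ := by
  rw [aCount_cast, aCount_cast, cntTo_eq, cntTo_eq, ← Finset.sum_add_distrib,
    ← Finset.sum_add_distrib]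
  refine Finset.sum_congr rfl (fun y _ => ?_)
  by_cases hy : y ∈ S
  · have hyv : y ≠ v := fun h => hv (h ▸ hy)
    have h1 : flipOn C u v S hu hv s(v, y) = C s(y, u) := by
      rw [Sym2.eq_swap]; exact flipOn_wv_mem huv hy
    rw [h1, if_pos hy, if_pos hy, show s(v,y) = s(y,v) from Sym2.eq_swap]
    simp only [hyv, true_and, ne_eq, not_false_eq_true]
    exact add_comm _ _
  · have h1 : flipOn C u v S hu hv s(v, y) = C s(v, y) := by
      by_cases hyu : y = u
      · subst hyu; rw [Sym2.eq_swap]; exact flipOn_uv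
      · rw [Sym2.eq_swap, flipOn_wv_not hy, Sym2.eq_swap]
    rw [h1, if_neg hy, if_neg hy]

lemma key_other (huv : u ≠ v) (hu : u ∉ S) (hv : v ∉ S) {x : Fin n}
    (hxu : x ≠ u) (hxv : x ≠ v) (μ : Fin (n - 1)) :
    aCount (flipOn C u v S hu hv) x μ = aCount C x μ := by
  by_cases hx : x ∈ S
  · unfold aCount
    refine Finset.card_equiv (Equiv.swap u v) (fun y => ?_)
    have hswap : ∀ z : Fin n, flipOn C u v S hu hv s(x, z) = C s(x, Equiv.swap u v z) := by
      intro z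
      by_cases hzu : z = u
      · subst hzu; rw [Equiv.swap_apply_left]; exact flipOn_wu_mem hx
      · by_cases hzv : z = v
        · subst hzv
          rw [Equiv.swap_apply_right]; exact flipOn_wv_mem huv hx
        · rw [Equiv.swap_apply_of_ne_of_ne hzu hzv, flipOn_notmem hxu hxv hzu hzv]
    simp only [Finset.mem_filter, Finset.mem_univ, true_and]
    constructor
    · rintro ⟨h1, h2⟩
      refine ⟨fun h => h1 ?_, by rw [← hswap y]; exact h2⟩
      have := congrArg (Equiv.swap u v) h
      rwa [Equiv.swap_apply_self, Equiv.swap_apply_of_ne_of_ne hxu hxv] at this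
    · rintro ⟨h1, h2⟩
      refine ⟨fun h => h1 ?_, by rw [hswap y]; exact h2⟩
      rw [h, Equiv.swap_apply_of_ne_of_ne hxu hxv]
  · unfold aCount
    congr 1
    refine Finset.filter_congr (fun y _ => ?_)
    have h1 : flipOn C u v S hu hv s(x, y) = C s(x, y) := by
      by_cases hyu : y = u
      · subst hyu; exact flipOn_wu_not hx
      · by_cases hyv : y = v
        · subst hyv; exact flipOn_wv_not hx
        · exact flipOn_notmem hxu hxv hyu hyv
    rw [h1]

end Count
section PhiDiff
variable {n : ℕ} {C : EdgeColoring n} {u v : Fin n} {S : Finset (Fin n)}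

lemma phi_cast (D : EdgeColoring n) :
    (Phi D : ℤ) = ∑ x : Fin n, ∑ μ : Fin (n - 1), (aCount D x μ : ℤ) ^ 2 := by
  rw [Phi]; push_cast; rfl

lemma phi_diff (huv : u ≠ v) (hu : u ∉ S) (hv : v ∉ S) :
    (Phi (flipOn C u v S hu hv) : ℤ) - Phi C =
      ∑ μ : Fin (n - 1), 2 * (cntTo C S u μ - cntTo C S v μ) *
        ((cntTo C S u μ - cntTo C S v μ) - ((aCount C u μ : ℤ) - aCount C v μ)) := by
  set C' := flipOn C u v S hu hv with hC'
  rw [phi_cast, phi_cast, ← Finset.sum_sub_distrib]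
  have hzero : ∀ x ∈ Finset.univ, x ∉ ({u, v} : Finset (Fin n)) →
      (∑ μ : Fin (n-1), (aCount C' x μ : ℤ)^2) - (∑ μ : Fin (n-1), (aCount C x μ : ℤ)^2)
        = 0 := by
    intro x _ hx
    simp only [Finset.mem_insert, Finset.mem_singleton, not_or] at hx
    have : ∀ μ : Fin (n-1), aCount C' x μ = aCount C x μ :=
      fun μ => key_other huv hu hv hx.1 hx.2 μ
    simp [this]
  rw [← Finset.sum_subset (Finset.subset_univ {u, v}) hzero, Finset.sum_pair huv,
    ← Finset.sum_sub_distrib, ← Finset.sum_sub_distrib, ← Finset.sum_add_distrib]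
  refine Finset.sum_congr rfl (fun μ _ => ?_)
  have h1 := key_u (C := C) huv hu hv μ
  have h2 := key_v (C := C) huv hu hv μ
  have hAu : (aCount C' u μ : ℤ)
      = aCount C u μ - (cntTo C S u μ - cntTo C S v μ) := by rw [hC']; linarith
  have hAv : (aCount C' v μ : ℤ)
      = aCount C v μ + (cntTo C S u μ - cntTo C S v μ) := by rw [hC']; linarith
  rw [hAu, hAv]; ring

lemma sum_eval {lam nu : Fin (n - 1)} (hln : lam ≠ nu) (d t : Fin (n - 1) → ℤ)
    (ht : ∀ ρ, t ρ = (if ρ = lam then 1 else 0) - (if ρ = nu then 1 else 0)) :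
    ∑ μ : Fin (n - 1), 2 * t μ * (t μ - d μ)
      = 2 * (1 - d lam) + 2 * (1 + d nu) := by
  have key : ∀ μ : Fin (n - 1), 2 * t μ * (t μ - d μ) =
      (if μ = lam then 2 * (1 - d lam) else 0) + (if μ = nu then 2 * (1 + d nu) else 0) := by
    intro μ
    rw [ht]
    by_cases h1 : μ = lam <;> by_cases h2 : μ = nu
    · exact absurd (h1.symm.trans h2) hln
    · rw [if_pos h1, if_neg h2, if_pos h1, if_neg h2, h1]; ring
    · rw [if_neg h1, if_pos h2, if_neg h1, if_pos h2, h2]; ring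
    · rw [if_neg h1, if_neg h2, if_neg h1, if_neg h2]; ring
  rw [Finset.sum_congr rfl (fun μ _ => key μ), Finset.sum_add_distrib,
    Finset.sum_ite_eq', Finset.sum_ite_eq']
  simp

end PhiDiff
section Reach
variable {n : ℕ} (C : EdgeColoring n) (u v : Fin n)

/-- Auxiliary directed relation on colors: `relc α β` iff some vertex `w ∉ {u,v}` has
`C(wu) = α` and `C(wv) = β` with `α ≠ β`. -/
def relc (α β : Fin (n - 1)) : Prop :=
  ∃ w : Fin n, w ≠ u ∧ w ≠ v ∧ C s(w, u) = α ∧ C s(w, v) = β ∧ α ≠ β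

lemma aCount_split (x y : Fin n) (hxy : y ≠ x) (ρ : Fin (n - 1)) :
    (aCount C x ρ : ℤ) =
      (∑ w : Fin n, if w ≠ x ∧ w ≠ y ∧ C s(w, x) = ρ then 1 else 0)
        + (if C s(x, y) = ρ then 1 else 0) := by
  rw [aCount_cast]
  have h0 : (if C s(x,y) = ρ then (1:ℤ) else 0)
      = ∑ w : Fin n, if w = y then (if C s(x,y) = ρ then (1:ℤ) else 0) else 0 := by
    rw [Finset.sum_ite_eq']; simp
  rw [h0, ← Finset.sum_add_distrib]
  refine Finset.sum_congr rfl (fun w _ => ?_)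
  by_cases hw : w = y
  · subst hw; simp [hxy]
  · rw [if_neg hw, add_zero, show s(x, w) = s(w, x) from Sym2.eq_swap]
    simp [hw]

lemma reach_sum (huv : u ≠ v) (lam : Fin (n - 1)) (R : Finset (Fin (n - 1)))
    (hR : ∀ ρ, ρ ∈ R ↔ Relation.ReflTransGen (relc C u v) lam ρ) :
    ∑ ρ ∈ R, ((aCount C u ρ : ℤ) - aCount C v ρ) ≤ 0 := by
  have hsplit : ∀ ρ ∈ R, (aCount C u ρ : ℤ) - aCount C v ρ =
      (∑ w : Fin n, if w ≠ u ∧ w ≠ v ∧ C s(w, u) = ρ then (1:ℤ) else 0)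
        - (∑ w : Fin n, if w ≠ v ∧ w ≠ u ∧ C s(w, v) = ρ then (1:ℤ) else 0) := by
    intro ρ _
    rw [aCount_split C u v huv.symm ρ, aCount_split C v u huv ρ,
      show s(v, u) = s(u, v) from Sym2.eq_swap]
    ring
  rw [Finset.sum_congr rfl hsplit, Finset.sum_sub_distrib, Finset.sum_comm,
    Finset.sum_comm (s := R)]
  rw [sub_nonpos]
  refine Finset.sum_le_sum (fun w _ => ?_)
  by_cases hw : w ≠ u ∧ w ≠ v
  · have e1 : ∀ ρ ∈ R, (if w ≠ u ∧ w ≠ v ∧ C s(w, u) = ρ then (1:ℤ) else 0)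
        = if C s(w, u) = ρ then 1 else 0 := fun ρ _ => by simp [hw.1, hw.2]
    have e2 : ∀ ρ ∈ R, (if w ≠ v ∧ w ≠ u ∧ C s(w, v) = ρ then (1:ℤ) else 0)
        = if C s(w, v) = ρ then 1 else 0 := fun ρ _ => by simp [hw.1, hw.2]
    rw [Finset.sum_congr rfl e1, Finset.sum_congr rfl e2, Finset.sum_ite_eq,
      Finset.sum_ite_eq]
    by_cases h1 : C s(w, u) ∈ R
    · have h2 : C s(w, v) ∈ R := by
        by_cases heq : C s(w, u) = C s(w, v)
        · rwa [← heq]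
        · exact (hR _).mpr (Relation.ReflTransGen.tail ((hR _).mp h1)
            ⟨w, hw.1, hw.2, rfl, rfl, heq⟩)
      simp [h1, h2]
    · simp only [if_neg h1]
      split_ifs <;> norm_num
  · have e1 : ∀ ρ ∈ R, (if w ≠ u ∧ w ≠ v ∧ C s(w, u) = ρ then (1:ℤ) else 0) = 0 :=
      fun ρ _ => if_neg (by tauto)
    have e2 : ∀ ρ ∈ R, (if w ≠ v ∧ w ≠ u ∧ C s(w, v) = ρ then (1:ℤ) else 0) = 0 :=
      fun ρ _ => if_neg (by tauto)
    rw [Finset.sum_eq_zero e1, Finset.sum_eq_zero e2]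

lemma exists_nu (huv : u ≠ v) (lam : Fin (n - 1)) (R : Finset (Fin (n - 1)))
    (hR : ∀ ρ, ρ ∈ R ↔ Relation.ReflTransGen (relc C u v) lam ρ)
    (hlam2 : 2 ≤ (aCount C u lam : ℤ) - aCount C v lam) :
    ∃ ν, Relation.ReflTransGen (relc C u v) lam ν ∧ ν ≠ lam ∧
      (aCount C u ν : ℤ) - aCount C v ν ≤ -1 := by
  have hsum := reach_sum C u v huv lam R hR
  have hlamR : lam ∈ R := (hR lam).mpr Relation.ReflTransGen.refl
  rw [← Finset.add_sum_erase _ _ hlamR] at hsum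
  by_contra hcon
  push_neg at hcon
  have hpos : 0 ≤ ∑ ρ ∈ R.erase lam, ((aCount C u ρ : ℤ) - aCount C v ρ) := by
    refine Finset.sum_nonneg (fun ρ hρ => ?_)
    obtain ⟨hne, hmem⟩ := Finset.mem_erase.mp hρ
    have := hcon ρ ((hR ρ).mp hmem) hne
    omega
  linarith
end Reach

lemma exists_nodup_chain {α : Type*} {r : α → α → Prop} :
    ∀ (m : ℕ) (l : List α) (a : α), l.length ≤ m → List.Chain r a l →
      ∃ l' : List α, List.Chain r a l' ∧ (a :: l').getLast? = (a :: l).getLast? ∧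
        (a :: l').Nodup ∧ l' ⊆ l := by
  intro m
  induction m with
  | zero =>
    intro l a hl _
    have : l = [] := List.length_eq_zero_iff.mp (Nat.le_zero.mp hl)
    subst this
    exact ⟨[], List.Chain.nil, rfl, List.nodup_singleton a, fun x h => h⟩
  | succ m ih =>
    intro l a hl hchain
    cases l with
    | nil => exact ⟨[], List.Chain.nil, rfl, List.nodup_singleton a, fun x h => h⟩
    | cons c t =>
      by_cases hmem : a ∈ c :: t
      · obtain ⟨s₁, t₂, hst⟩ := List.append_of_mem hmem
        have hch2 : List.Chain r a t₂ := by
          rw [hst] at hchain; exact (List.isChain_cons_split.mp hchain).2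
        have hlen : t₂.length ≤ m := by
          have h1 : t.length + 1 ≤ m + 1 := by simpa using hl
          have h2 : t.length + 1 = s₁.length + (t₂.length + 1) := by
            simpa using congrArg List.length hst
          omega
        obtain ⟨l', h1, h2, h3, h4⟩ := ih t₂ a hlen hch2
        refine ⟨l', h1, ?_, h3, ?_⟩
        · rw [h2, hst, show a :: (s₁ ++ a :: t₂) = (a :: s₁) ++ a :: t₂ from rfl,
            List.getLast?_append_cons]
        · intro x hx
          rw [hst]
          exact List.mem_append.mpr (Or.inr (List.mem_cons_of_mem a (h4 hx)))
      · obtain ⟨hrac, hcht⟩ := List.chain_cons.mp hchain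
        have hlt : t.length ≤ m := by simpa using hl
        obtain ⟨l'', h1, h2, h3, h4⟩ := ih t c hlt hcht
        refine ⟨c :: l'', List.chain_cons.mpr ⟨hrac, h1⟩, ?_, ?_, ?_⟩
        · rw [List.getLast?_cons_cons, h2, List.getLast?_cons_cons]
        · refine List.nodup_cons.mpr ⟨fun hac => hmem ?_, h3⟩
          rcases List.mem_cons.mp hac with h | h
          · exact h ▸ List.mem_cons_self (a := c) (l := t)
          · exact List.mem_cons_of_mem c (h4 h)
        · intro x hx
          rcases List.mem_cons.mp hx with h | h
          · exact h ▸ List.mem_cons_self (a := c) (l := t)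
          · exact List.mem_cons_of_mem c (h4 h)

lemma build {n : ℕ} {C : EdgeColoring n} {u v : Fin n} :
    ∀ (l : List (Fin (n - 1))) (a b : Fin (n - 1)), l ≠ [] →
      List.Chain (relc C u v) a l → (a :: l).Nodup →
      (a :: l).getLast? = some b →
      ∃ S : Finset (Fin n), (∀ w ∈ S, w ≠ u ∧ w ≠ v) ∧
        (∀ w ∈ S, C s(w, u) ∈ a :: l) ∧
        ∀ ρ, cntTo C S u ρ - cntTo C S v ρ
          = (if ρ = a then 1 else 0) - (if ρ = b then 1 else 0) := by
  intro l
  induction l with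
  | nil => intro a b h; exact absurd rfl h
  | cons c t iht =>
    intro a b _ hchain hnodup hlast
    obtain ⟨hrel, hcht⟩ := List.chain_cons.mp hchain
    obtain ⟨w₀, hw₀u, hw₀v, hw₀a, hw₀c, hac⟩ := hrel
    cases t with
    | nil =>
      have hb : b = c := by
        have := hlast
        rw [List.getLast?_cons_cons] at this
        simpa using this.symm
      subst hb
      refine ⟨{w₀}, ?_, ?_, ?_⟩
      · intro w hw; rw [Finset.mem_singleton] at hw; subst hw; exact ⟨hw₀u, hw₀v⟩
      · intro w hw; rw [Finset.mem_singleton] at hw; subst hw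
        rw [hw₀a]; exact List.mem_cons_self
      · intro ρ
        simp only [cntTo, Finset.sum_singleton, hw₀a, hw₀c]
        simp [eq_comm]
    | cons c' t' =>
      have hlast' : (c :: c' :: t').getLast? = some b := by
        rw [← List.getLast?_cons_cons (a := a)]; exact hlast
      obtain ⟨S', hS1, hS2, hS3⟩ :=
        iht c b (List.cons_ne_nil _ _) hcht hnodup.of_cons hlast'
      have hw₀S : w₀ ∉ S' := fun h => (List.nodup_cons.mp hnodup).1
        (by rw [← hw₀a]; exact hS2 w₀ h)
      refine ⟨insert w₀ S', ?_, ?_, ?_⟩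
      · intro w hw
        rcases Finset.mem_insert.mp hw with h | h
        · subst h; exact ⟨hw₀u, hw₀v⟩
        · exact hS1 w h
      · intro w hw
        rcases Finset.mem_insert.mp hw with h | h
        · subst h; rw [hw₀a]; exact List.mem_cons_self
        · exact List.mem_cons_of_mem a (hS2 w h)
      · intro ρ
        have hthis := hS3 ρ
        simp only [cntTo] at hthis ⊢
        rw [Finset.sum_insert hw₀S, Finset.sum_insert hw₀S, hw₀a, hw₀c]
        have ea : (if a = ρ then (1:ℤ) else 0) = if ρ = a then 1 else 0 := by simp [eq_comm]
        have ec : (if c = ρ then (1:ℤ) else 0) = if ρ = c then 1 else 0 := by simp [eq_comm]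
        rw [ea, ec]
        linarith

lemma isflip_symm {n : ℕ} {C C' : EdgeColoring n} {u v : Fin n}
    (h : IsFlip C C' v u) : IsFlip C C' u v := by
  obtain ⟨h1, h2, h3⟩ := h
  refine ⟨by rw [Sym2.eq_swap]; exact h1, fun e he hue hve => h2 e he hve hue,
    fun w hwu hwv => ?_⟩
  rcases h3 w hwv hwu with ⟨ha, hb⟩ | ⟨ha, hb⟩
  · exact Or.inl ⟨hb, ha⟩
  · exact Or.inr ⟨hb, ha⟩

theorem flip_main {n : ℕ} (C : EdgeColoring n) (u v : Fin n) (huv : u ≠ v)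
    (lam : Fin (n - 1)) (hd : 2 ≤ (aCount C u lam : ℤ) - aCount C v lam) :
    ∃ C' : EdgeColoring n, IsFlip C C' u v ∧ Phi C' < Phi C := by
  classical
  obtain ⟨ν, hreach, hνlam, hν⟩ := exists_nu C u v huv lam
    (Finset.univ.filter (fun ρ => Relation.ReflTransGen (relc C u v) lam ρ))
    (fun ρ => by simp) hd
  obtain ⟨l, hchain, hlastt⟩ := List.exists_isChain_cons_of_relationReflTransGen hreach
  have hlastq : (lam :: l).getLast? = some ν := by
    rw [List.getLast?_eq_getLast (List.cons_ne_nil _ _), hlastt]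
  obtain ⟨l', hch', hlast', hnodup', hsub⟩ :=
    exists_nodup_chain l.length l lam le_rfl hchain
  have hl'ne : l' ≠ [] := by
    intro h
    subst h
    rw [hlastq] at hlast'
    simp only [List.getLast?_singleton, Option.some.injEq] at hlast'
    exact hνlam hlast'.symm
  obtain ⟨S, hS1, _, hS3⟩ := build l' lam ν hl'ne hch' hnodup' (hlast'.trans hlastq)
  have hu : u ∉ S := fun h => (hS1 u h).1 rfl
  have hv : v ∉ S := fun h => (hS1 v h).2 rfl
  refine ⟨flipOn C u v S hu hv, isFlip_flipOn huv, ?_⟩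
  have hval : (Phi (flipOn C u v S hu hv) : ℤ) - Phi C =
      2 * (1 - ((aCount C u lam : ℤ) - aCount C v lam))
        + 2 * (1 + ((aCount C u ν : ℤ) - aCount C v ν)) := by
    rw [phi_diff huv hu hv]
    exact sum_eval (fun h => hνlam h.symm)
      (fun μ => (aCount C u μ : ℤ) - aCount C v μ)
      (fun μ => cntTo C S u μ - cntTo C S v μ) hS3
  have hlt : (Phi (flipOn C u v S hu hv) : ℤ) < Phi C := by linarith
  exact_mod_cast hlt

/-- If `|a_{u,λ} − a_{v,λ}| ≥ 2` for some color `λ`, then there is a `(u,v)`-flip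
that strictly decreases `Φ`. -/
theorem exists_flip_decreasing_phi (n : ℕ) (hn : Even n) (h2 : 2 ≤ n)
    (C : EdgeColoring n) (u v : Fin n) (huv : u ≠ v)
    (hlam : ∃ lam : Fin (n - 1), 2 ≤ |(aCount C u lam : ℤ) - (aCount C v lam : ℤ)|) :
    ∃ C' : EdgeColoring n, IsFlip C C' u v ∧ Phi C' < Phi C := by
  obtain ⟨lam, hlam⟩ := hlam
  rcases le_abs.mp hlam with h | h
  · exact flip_main C u v huv lam h
  · obtain ⟨C', hflip, hphi⟩ := flip_main C v u huv.symm lam (by linarith)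
    exact ⟨C', isflip_symm hflip, hphi⟩
end

section
/- Every finite oriented multigraph (possibly with loops and parallel edges) can be reoriented, by reversing the direction of some of its edges, so that at every vertex the indegree and the outdegree differ by at most one. -/
open Finset

section BalancedOrientation


universe u v

private lemma my_sum_split {E : Type u} [Fintype E] [DecidableEq E] (e : E) (g : E → ℤ) :
    ∑ x : E, g x = g e + ∑ x : {x : E // x ≠ e}, g x.1 := by
  have h1 : ∑ x : {x : E // x ≠ e}, g x.1 = ∑ x ∈ Finset.univ.erase e, g x := by
    rw [Finset.sum_subtype (p := fun x => x ≠ e) (Finset.univ.erase e) (fun x => by simp) g]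
  rw [h1]
  exact (Finset.add_sum_erase _ g (Finset.mem_univ e)).symm

private lemma balanced_aux {V : Type v} [DecidableEq V] :
    ∀ (n : ℕ) (E : Type u) [Fintype E], Fintype.card E = n → ∀ (s t : E → V),
      ∃ r : E → Bool, ∀ w : V,
        |∑ x : E, ((if (if r x then t x else s x) = w then (1 : ℤ) else 0) -
            (if (if r x then s x else t x) = w then (1 : ℤ) else 0))| ≤ 1 := by
  intro n
  induction n using Nat.strong_induction_on with
  | _ n IH =>
    intro E _ hcard s t
    classical
    by_cases hloop : ∃ e : E, s e = t e
    · -- Case 1: remove a loop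
      obtain ⟨e, he⟩ := hloop
      have hn : 1 ≤ n := hcard ▸ Fintype.card_pos_iff.mpr ⟨e⟩
      have hcard' : Fintype.card {x : E // x ≠ e} = n - 1 := by
        have := Fintype.card_subtype_compl (fun x : E => x = e)
        simp only [Fintype.card_subtype_eq] at this
        simpa [hcard] using this
      obtain ⟨r', hr'⟩ := IH (n - 1) (by omega) {x : E // x ≠ e} hcard'
        (fun x => s x.1) (fun x => t x.1)
      refine ⟨fun x => if h : x = e then true else r' ⟨x, h⟩, fun w => ?_⟩
      rw [my_sum_split e]
      have h2 : (fun x => if h : x = e then true else r' ⟨x, h⟩) e = true := dif_pos rfl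
      have hsum : ∀ x : {x : E // x ≠ e},
          ((if (if (if h : x.1 = e then true else r' ⟨x.1, h⟩) then t x.1 else s x.1) = w
              then (1 : ℤ) else 0) -
            (if (if (if h : x.1 = e then true else r' ⟨x.1, h⟩) then s x.1 else t x.1) = w
              then (1 : ℤ) else 0)) =
          ((if (if r' x then t x.1 else s x.1) = w then (1 : ℤ) else 0) -
            (if (if r' x then s x.1 else t x.1) = w then (1 : ℤ) else 0)) := by
        intro x
        rw [dif_neg x.2]
      rw [Finset.sum_congr rfl (fun x _ => hsum x)]
      simp only [h2, if_true, he]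
      simpa using hr' w
    · by_cases htwo : ∃ e f : E, e ≠ f ∧ ∃ v : V, (s e = v ∨ t e = v) ∧ (s f = v ∨ t f = v)
      · -- Case 2: split off two edges sharing a vertex
        obtain ⟨e, f, hef, v, hev, hfv⟩ := htwo
        set a : V := if s e = v then t e else s e with ha
        set b : V := if s f = v then t f else s f with hb
        have hn : 1 ≤ n := hcard ▸ Fintype.card_pos_iff.mpr ⟨e⟩
        have hcard' : Fintype.card {x : E // x ≠ f} = n - 1 := by
          have := Fintype.card_subtype_compl (fun x : E => x = f)
          simp only [Fintype.card_subtype_eq] at this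
          simpa [hcard] using this
        set E' := {x : E // x ≠ f} with hE'
        set e' : E' := ⟨e, hef⟩ with he'
        set s' : E' → V := fun x => if x = e' then a else s x.1 with hs'
        set t' : E' → V := fun x => if x = e' then b else t x.1 with ht'
        obtain ⟨r', hr'⟩ := IH (n - 1) (by omega) E' hcard' s' t'
        set r : E → Bool := fun x =>
          if x = e then (if s e = v then !(r' e') else r' e')
          else if hxf : x = f then (if s f = v then r' e' else !(r' e'))
          else r' ⟨x, hxf⟩ with hr
        refine ⟨r, fun w => ?_⟩
        have hre : r e = (if s e = v then !(r' e') else r' e') := by rw [hr]; simp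
        have hrf : r f = (if s f = v then r' e' else !(r' e')) := by
          rw [hr]; simp [Ne.symm hef]
        have hrx : ∀ x : E, x ≠ e → ∀ hxf : x ≠ f, r x = r' ⟨x, hxf⟩ := by
          intro x hxe hxf
          rw [hr]; simp only [if_neg hxe]; rw [dif_neg hxf]
        have k1 : (if r e then t e else s e) = (if r' e' then v else a) := by
          by_cases h : s e = v
          · have h2 : t e = a := by rw [ha, if_pos h]
            rw [hre, if_pos h]
            cases hcc : r' e' <;> simp [h, h2]
          · have h1 : s e = a := by rw [ha, if_neg h]
            have h2 : t e = v := by rcases hev with h' | h'; exact absurd h' h; exact h'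
            rw [hre, if_neg h]
            cases hcc : r' e' <;> simp [h1, h2]
        have k2 : (if r e then s e else t e) = (if r' e' then a else v) := by
          by_cases h : s e = v
          · have h2 : t e = a := by rw [ha, if_pos h]
            rw [hre, if_pos h]
            cases hcc : r' e' <;> simp [h, h2]
          · have h1 : s e = a := by rw [ha, if_neg h]
            have h2 : t e = v := by rcases hev with h' | h'; exact absurd h' h; exact h'
            rw [hre, if_neg h]
            cases hcc : r' e' <;> simp [h1, h2]
        have k3 : (if r f then t f else s f) = (if r' e' then b else v) := by
          by_cases h : s f = v
          · have h2 : t f = b := by rw [hb, if_pos h]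
            rw [hrf, if_pos h]
            cases hcc : r' e' <;> simp [h, h2]
          · have h1 : s f = b := by rw [hb, if_neg h]
            have h2 : t f = v := by rcases hfv with h' | h'; exact absurd h' h; exact h'
            rw [hrf, if_neg h]
            cases hcc : r' e' <;> simp [h1, h2]
        have k4 : (if r f then s f else t f) = (if r' e' then v else b) := by
          by_cases h : s f = v
          · have h2 : t f = b := by rw [hb, if_pos h]
            rw [hrf, if_pos h]
            cases hcc : r' e' <;> simp [h, h2]
          · have h1 : s f = b := by rw [hb, if_neg h]
            have h2 : t f = v := by rcases hfv with h' | h'; exact absurd h' h; exact h'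
            rw [hrf, if_neg h]
            cases hcc : r' e' <;> simp [h1, h2]
        have hs'e : s' e' = a := by rw [hs']; simp
        have ht'e : t' e' = b := by rw [ht']; simp
        set F : E → ℤ := fun x => ((if (if r x then t x else s x) = w then (1 : ℤ) else 0) -
            (if (if r x then s x else t x) = w then (1 : ℤ) else 0)) with hFdef
        set F' : E' → ℤ := fun x => ((if (if r' x then t' x else s' x) = w then (1 : ℤ) else 0) -
            (if (if r' x then s' x else t' x) = w then (1 : ℤ) else 0)) with hF'def
        have step1 : ∑ x : E, F x = F f + ∑ x : E', F x.1 := my_sum_split f F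
        have step2 : ∑ x : E', F x.1 = F e + ∑ y : {x : E' // x ≠ e'}, F y.1.1 :=
          my_sum_split e' (fun x : E' => F x.1)
        have step3 : ∑ x : E', F' x = F' e' + ∑ y : {x : E' // x ≠ e'}, F' y.1 :=
          my_sum_split e' F'
        have step4 : ∀ y : {x : E' // x ≠ e'}, F' y.1 = F y.1.1 := by
          intro y
          have hy1 : y.1.1 ≠ f := y.1.2
          have hy2 : y.1.1 ≠ e := fun h => y.2 (Subtype.ext h)
          have hrr : r y.1.1 = r' y.1 := hrx y.1.1 hy2 hy1
          have hss : s' y.1 = s y.1.1 := by rw [hs']; exact if_neg y.2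
          have htt : t' y.1 = t y.1.1 := by rw [ht']; exact if_neg y.2
          rw [hF'def, hFdef]
          simp only [hrr, hss, htt]
        have step5 : F e + F f = F' e' := by
          rw [hFdef, hF'def]
          simp only [k1, k2, k3, k4, hs'e, ht'e]
          cases hcc : r' e' <;>
            simp only [hcc, Bool.false_eq_true, if_true, if_false] <;> ring
        have final : ∑ x : E, F x = ∑ x : E', F' x := by
          rw [step1, step2, step3, Finset.sum_congr rfl (fun y _ => step4 y), ← step5]
          ring
        rw [final]
        exact hr' w
      · -- Base case: every vertex is incident with at most one edge, no loops
        push_neg at hloop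
        refine ⟨fun _ => false, fun w => ?_⟩
        have habs : ∀ x : E,
            |((if (if (false : Bool) then t x else s x) = w then (1 : ℤ) else 0) -
              (if (if (false : Bool) then s x else t x) = w then (1 : ℤ) else 0))| =
            (if (s x = w ∨ t x = w) then (1 : ℤ) else 0) := by
          intro x
          by_cases h1 : s x = w <;> by_cases h2 : t x = w
          · exact absurd (h1.trans h2.symm) (hloop x)
          · simp [h1, h2]
          · simp [h1, h2]
          · simp [h1, h2]
        calc |∑ x : E, ((if (if (fun _ : E => false) x then t x else s x) = w then (1 : ℤ) else 0) -
                (if (if (fun _ : E => false) x then s x else t x) = w then (1 : ℤ) else 0))|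
            ≤ ∑ x : E, |((if (if (false : Bool) then t x else s x) = w then (1 : ℤ) else 0) -
                (if (if (false : Bool) then s x else t x) = w then (1 : ℤ) else 0))| :=
              Finset.abs_sum_le_sum_abs _ _
          _ = ∑ x : E, (if (s x = w ∨ t x = w) then (1 : ℤ) else 0) :=
              Finset.sum_congr rfl (fun x _ => habs x)
          _ = ((Finset.univ.filter (fun x : E => s x = w ∨ t x = w)).card : ℤ) := by
              rw [Finset.sum_boole]
          _ ≤ 1 := by
              have : (Finset.univ.filter (fun x : E => s x = w ∨ t x = w)).card ≤ 1 := by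
                apply Finset.card_le_one.mpr
                intro x hx y hy
                simp only [Finset.mem_filter] at hx hy
                by_contra hxy
                exact htwo ⟨x, y, hxy, w, hx.2, hy.2⟩
              exact_mod_cast this

end BalancedOrientation

/-- Every finite oriented multigraph (given by source and target maps
`s, t : E → V`, loops and parallel edges allowed) can be reoriented (each edge either kept or
reversed, recorded by `r : E → Bool`) so that at every vertex the indegree and the outdegree
differ by at most one. -/
theorem exists_balanced_reorientation {V E : Type*} [Fintype V] [Fintype E] [DecidableEq V]
    (s t : E → V) :
    ∃ r : E → Bool, ∀ v : V,
      |((Finset.univ.filter (fun e : E => (if r e then t e else s e) = v)).card : ℤ) -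
        ((Finset.univ.filter (fun e : E => (if r e then s e else t e) = v)).card : ℤ)| ≤ 1 := by

  obtain ⟨r, hr⟩ := balanced_aux (Fintype.card E) E rfl s t
  refine ⟨r, fun v => ?_⟩
  have key : ∀ (P : E → Prop) [DecidablePred P],
      ((Finset.univ.filter P).card : ℤ) = ∑ x : E, (if P x then (1 : ℤ) else 0) := by
    intro P _
    rw [Finset.card_filter]
    push_cast
    rfl
  rw [key, key, ← Finset.sum_sub_distrib]
  exact hr v
end

section
/- For every even integer n and every k with 4 ≤ k ≤ n, every one-factorization of K_n has a set S of k vertices with deficit D(S) ≥ k − 3. -/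
open Finset

-- unique partner
lemma partner_exists_unique {n : ℕ} (hn : 1 ≤ n) (X : EdgeColoring n)
    (hX : IsOneFactorization X) (μ : Fin (n - 1)) (u : Fin n) :
    ∃! v : Fin n, v ≠ u ∧ X s(u, v) = μ := by
  have hinj : Set.InjOn (fun v => X s(u, v)) (Finset.univ.erase u : Finset (Fin n)) := by
    intro v hv w hw hvw
    by_contra hne
    have hv' : v ≠ u := (Finset.mem_erase.1 hv).1
    have hw' : w ≠ u := (Finset.mem_erase.1 hw).1
    refine hX s(u, v) s(u, w) ?_ ?_ ?_ ⟨u, ?_, ?_⟩ hvw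
    · simpa [Sym2.mk_isDiag_iff] using hv'.symm
    · simpa [Sym2.mk_isDiag_iff] using hw'.symm
    · rw [Ne, Sym2.eq_iff]
      rintro (⟨-, rfl⟩ | ⟨rfl, rfl⟩)
      · exact hne rfl
      · exact hne rfl
    · simp
    · simp
  have hcard : ((Finset.univ.erase u).image (fun v => X s(u, v))).card = n - 1 := by
    rw [Finset.card_image_of_injOn hinj, Finset.card_erase_of_mem (Finset.mem_univ u),
      Finset.card_univ, Fintype.card_fin]
  have himg : ((Finset.univ.erase u).image (fun v => X s(u, v))) = Finset.univ := by
    apply Finset.eq_univ_of_card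
    rw [hcard, Fintype.card_fin]
  have hmem : μ ∈ (Finset.univ.erase u).image (fun v => X s(u, v)) := by
    rw [himg]; exact Finset.mem_univ μ
  obtain ⟨v, hv, hvc⟩ := Finset.mem_image.1 hmem
  refine ⟨v, ⟨(Finset.mem_erase.1 hv).1, hvc⟩, ?_⟩
  rintro w ⟨hw, hwc⟩
  exact hinj (by simp [hw]) hv (by show X s(u, w) = X s(u, v); rw [hvc, hwc])

-- boundary step
lemma step_aux {n : ℕ} (f g : Fin n → Fin n) (hf : ∀ x, f (f x) = x)
    (S : Finset (Fin n)) (x : Fin n) (hx : x ∈ S) (hfx : f x ∉ S) :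
    ((insert (f x) S).filter fun y => f y ∉ insert (f x) S).card +
      ((insert (f x) S).filter fun y => g y ∉ insert (f x) S).card ≤
    (S.filter fun y => f y ∉ S).card + (S.filter fun y => g y ∉ S).card := by
  have h1 : ((insert (f x) S).filter fun y => f y ∉ insert (f x) S) ⊆
      (S.filter fun y => f y ∉ S).erase x := by
    intro y hy
    simp only [Finset.mem_filter, Finset.mem_insert, Finset.mem_erase, not_or] at hy ⊢
    obtain ⟨hy1, hy2, hy3⟩ := hy
    rcases hy1 with rfl | hyS
    · exact absurd (show f (f x) ∈ S by rw [hf]; exact hx) hy3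
    · refine ⟨?_, hyS, hy3⟩
      rintro rfl
      exact hy2 rfl
  have h2 : ((insert (f x) S).filter fun y => g y ∉ insert (f x) S) ⊆
      insert (f x) (S.filter fun y => g y ∉ S) := by
    intro y hy
    simp only [Finset.mem_filter, Finset.mem_insert, not_or] at hy ⊢
    obtain ⟨hy1, _, hy3⟩ := hy
    rcases hy1 with rfl | hyS
    · exact Or.inl rfl
    · exact Or.inr ⟨hyS, hy3⟩
  have hxmem : x ∈ S.filter fun y => f y ∉ S := Finset.mem_filter.2 ⟨hx, hfx⟩
  have c1 := Finset.card_le_card h1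
  have c2 := Finset.card_le_card h2
  have c3 := Finset.card_erase_of_mem hxmem
  have c4 := Finset.card_insert_le (f x) (S.filter fun y => g y ∉ S)
  have hpos : 0 < (S.filter fun y => f y ∉ S).card := Finset.card_pos.2 ⟨x, hxmem⟩
  omega

lemma exists_good_set {n : ℕ} (f g : Fin n → Fin n)
    (hf : ∀ x, f (f x) = x) (hg : ∀ x, g (g x) = x)
    (hf0 : ∀ x, f x ≠ x) (hg0 : ∀ x, g x ≠ x) (k : ℕ) (hk1 : 1 ≤ k) (hkn : k ≤ n) :
    ∃ S : Finset (Fin n), S.card = k ∧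
      (S.filter fun x => f x ∉ S).card + (S.filter fun x => g x ∉ S).card ≤ 2 := by
  induction k, hk1 using Nat.le_induction with
  | base =>
      have : 0 < n := hkn
      have : Nonempty (Fin n) := ⟨⟨0, this⟩⟩
      obtain ⟨x⟩ := this
      refine ⟨{x}, Finset.card_singleton x, ?_⟩
      have h1 : ({x} : Finset (Fin n)).filter (fun y => f y ∉ ({x} : Finset (Fin n))) = {x} := by
        ext y
        simp only [Finset.mem_filter, Finset.mem_singleton]
        constructor
        · exact fun h => h.1
        · rintro rfl; exact ⟨rfl, hf0 _⟩
      have h2 : ({x} : Finset (Fin n)).filter (fun y => g y ∉ ({x} : Finset (Fin n))) = {x} := by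
        ext y
        simp only [Finset.mem_filter, Finset.mem_singleton]
        constructor
        · exact fun h => h.1
        · rintro rfl; exact ⟨rfl, hg0 _⟩
      rw [h1, h2]; simp
  | succ k hk IH =>
      obtain ⟨S, hcard, hbd⟩ := IH (by omega)
      by_cases hA : ∃ x ∈ S, f x ∉ S
      · obtain ⟨x, hx, hfx⟩ := hA
        refine ⟨insert (f x) S, ?_, ?_⟩
        · rw [Finset.card_insert_of_notMem hfx, hcard]
        · exact le_trans (step_aux f g hf S x hx hfx) hbd
      · by_cases hB : ∃ x ∈ S, g x ∉ S
        · obtain ⟨x, hx, hgx⟩ := hB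
          refine ⟨insert (g x) S, ?_, ?_⟩
          · rw [Finset.card_insert_of_notMem hgx, hcard]
          · have := step_aux g f hg S x hx hgx
            omega
        · push_neg at hA hB
          have hz : ∃ z, z ∉ S := by
            by_contra h
            push_neg at h
            have : S = Finset.univ := Finset.eq_univ_iff_forall.2 h
            rw [this, Finset.card_univ, Fintype.card_fin] at hcard
            omega
          obtain ⟨z, hz⟩ := hz
          refine ⟨insert z S, ?_, ?_⟩
          · rw [Finset.card_insert_of_notMem hz, hcard]
          · have h1 : ((insert z S).filter fun y => f y ∉ insert z S) ⊆ {z} := by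
              intro y hy
              simp only [Finset.mem_filter, Finset.mem_insert, not_or, Finset.mem_singleton] at hy ⊢
              obtain ⟨hy1, _, hy3⟩ := hy
              rcases hy1 with rfl | hyS
              · rfl
              · exact absurd (hA y hyS) hy3
            have h2 : ((insert z S).filter fun y => g y ∉ insert z S) ⊆ {z} := by
              intro y hy
              simp only [Finset.mem_filter, Finset.mem_insert, not_or, Finset.mem_singleton] at hy ⊢
              obtain ⟨hy1, _, hy3⟩ := hy
              rcases hy1 with rfl | hyS
              · rfl
              · exact absurd (hB y hyS) hy3
            have := Finset.card_le_card h1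
            have := Finset.card_le_card h2
            simp only [Finset.card_singleton] at *
            omega

-- edges card bound
lemma edgesIn_card_le {n : ℕ} (S : Finset (Fin n)) :
    (edgesIn S).card ≤ S.card.choose 2 := by
  classical
  have h := Finset.card_le_card_of_injOn (fun e => Finset.univ.filter (· ∈ e))
    (s := edgesIn S) (t := S.powersetCard 2) ?_ ?_
  · rwa [Finset.card_powersetCard] at h
  · intro e he
    simp only [edgesIn, Finset.mem_coe, Finset.mem_filter, Finset.mem_univ, true_and] at he
    obtain ⟨hd, hm⟩ := he
    induction e using Sym2.ind with
    | _ a b =>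
      rw [Sym2.mk_isDiag_iff] at hd
      have hab : (Finset.univ.filter (· ∈ s(a, b))) = {a, b} := by
        ext x
        simp [Sym2.mem_iff]
      show (Finset.univ.filter (· ∈ s(a, b))) ∈ S.powersetCard 2
      rw [Finset.mem_powersetCard, hab]
      constructor
      · intro x hx
        simp only [Finset.mem_insert, Finset.mem_singleton] at hx
        rcases hx with rfl | rfl
        · exact hm x (Sym2.mem_mk_left _ _)
        · exact hm x (Sym2.mem_mk_right _ _)
      · rw [Finset.card_insert_of_notMem (by simpa using hd), Finset.card_singleton]
  · intro e he e' he' heq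
    rw [Finset.mem_coe] at he he'
    simp only [edgesIn, Finset.mem_filter, Finset.mem_univ, true_and] at he he'
    induction e using Sym2.ind with
    | _ a b =>
      induction e' using Sym2.ind with
      | _ c d =>
        rw [Sym2.mk_isDiag_iff] at he he'
        have hmem : ∀ x : Fin n, x ∈ s(a, b) ↔ x ∈ s(c, d) := by
          intro x
          have := Finset.ext_iff.1 heq x
          simpa using this
        have ha : a = c ∨ a = d := by have := (hmem a).1 (Sym2.mem_mk_left a b); simpa [Sym2.mem_iff] using this
        have hb : b = c ∨ b = d := by have := (hmem b).1 (Sym2.mem_mk_right a b); simpa [Sym2.mem_iff] using this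
        rw [Sym2.eq_iff]
        rcases ha with rfl | rfl
        · rcases hb with rfl | rfl
          · exact absurd rfl he.1
          · exact Or.inl ⟨rfl, rfl⟩
        · rcases hb with rfl | rfl
          · exact Or.inr ⟨rfl, rfl⟩
          · exact absurd rfl he.1
open Classical in
lemma two_mul_fiber {n : ℕ} (X : EdgeColoring n) (S : Finset (Fin n)) (μ : Fin (n - 1))
    (f : Fin n → Fin n) (hf0 : ∀ x, f x ≠ x) (hcol : ∀ x, X s(x, f x) = μ) :
    (S.filter fun x => f x ∈ S).card ≤ 2 * ((edgesIn S).filter fun e => X e = μ).card := by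
  classical
  set T := S.filter fun x => f x ∈ S with hT
  have hmain : T.card ≤ 2 * (T.image (fun x => s(x, f x))).card := by
    apply Finset.card_le_mul_card_image
    intro e he
    obtain ⟨x₀, hx₀, rfl⟩ := Finset.mem_image.1 he
    have hsub : (T.filter fun x => s(x, f x) = s(x₀, f x₀)) ⊆ {x₀, f x₀} := by
      intro y hy
      obtain ⟨-, hy2⟩ := Finset.mem_filter.1 hy
      rw [Sym2.eq_iff] at hy2
      simp only [Finset.mem_insert, Finset.mem_singleton]
      rcases hy2 with ⟨h, -⟩ | ⟨h, -⟩
      · exact Or.inl h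
      · exact Or.inr h
    calc (T.filter fun x => s(x, f x) = s(x₀, f x₀)).card ≤ ({x₀, f x₀} : Finset (Fin n)).card :=
          Finset.card_le_card hsub
      _ ≤ 2 := Finset.card_insert_le _ _ |>.trans (by simp)
  have himg : T.image (fun x => s(x, f x)) ⊆ (edgesIn S).filter fun e => X e = μ := by
    intro e he
    obtain ⟨x, hx, rfl⟩ := Finset.mem_image.1 he
    obtain ⟨hxS, hfxS⟩ := Finset.mem_filter.1 hx
    refine Finset.mem_filter.2 ⟨?_, hcol x⟩
    simp only [edgesIn, Finset.mem_filter, Finset.mem_univ, true_and]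
    refine ⟨by simpa [Sym2.mk_isDiag_iff] using (hf0 x).symm, ?_⟩
    intro y hy
    rw [Sym2.mem_iff] at hy
    rcases hy with rfl | rfl
    · exact hxS
    · exact hfxS
  exact hmain.trans (Nat.mul_le_mul_left 2 (Finset.card_le_card himg))

open Classical in
lemma gamma_bound {n : ℕ} (X : EdgeColoring n) (S : Finset (Fin n)) (μ ν : Fin (n - 1))
    (hμν : μ ≠ ν) :
    gammaColors X S + ((edgesIn S).filter fun e => X e = μ).card
      + ((edgesIn S).filter fun e => X e = ν).card ≤ (edgesIn S).card + 2 := by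
  classical
  set E := edgesIn S with hE
  set A := E.filter fun e => X e = μ with hA
  set B := E.filter fun e => X e = ν with hB
  have hdisj : Disjoint A B := by
    rw [Finset.disjoint_left]
    intro e heA heB
    exact hμν ((Finset.mem_filter.1 heA).2 ▸ (Finset.mem_filter.1 heB).2.symm ▸ rfl)
  have hABsub : A ∪ B ⊆ E := Finset.union_subset (Finset.filter_subset _ _) (Finset.filter_subset _ _)
  have hsub : E.image X ⊆ ((E \ (A ∪ B)).image X) ∪ {μ, ν} := by
    intro c hc
    obtain ⟨e, he, rfl⟩ := Finset.mem_image.1 hc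
    by_cases h1 : X e = μ
    · simp [Finset.mem_union, h1]
    by_cases h2 : X e = ν
    · simp [Finset.mem_union, h2]
    refine Finset.mem_union_left _ (Finset.mem_image.2 ⟨e, ?_, rfl⟩)
    rw [Finset.mem_sdiff, Finset.mem_union]
    exact ⟨he, by simp [hA, hB, Finset.mem_filter, h1, h2]⟩
  have hγ : gammaColors X S ≤ (E \ (A ∪ B)).card + 2 := by
    calc gammaColors X S ≤ (((E \ (A ∪ B)).image X) ∪ {μ, ν}).card := Finset.card_le_card hsub
      _ ≤ ((E \ (A ∪ B)).image X).card + ({μ, ν} : Finset (Fin (n-1))).card := Finset.card_union_le _ _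
      _ ≤ (E \ (A ∪ B)).card + 2 := by
          have := Finset.card_image_le (s := E \ (A ∪ B)) (f := X)
          have h2 : ({μ, ν} : Finset (Fin (n-1))).card ≤ 2 :=
            Finset.card_insert_le _ _ |>.trans (by simp)
          omega
  have e2 : (E \ (A ∪ B)).card + (A ∪ B).card = E.card :=
    Finset.card_sdiff_add_card_eq_card hABsub
  have e3 : (A ∪ B).card = A.card + B.card := Finset.card_union_of_disjoint hdisj
  omega

/-- For every even `n` and every `4 ≤ k ≤ n`, every one-factorization of `K_n`
has a set of `k` vertices with deficit at least `k − 3`. -/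
theorem exists_set_deficit_k_sub_three (n : ℕ) (hn : Even n) (k : ℕ) (hk4 : 4 ≤ k)
    (hkn : k ≤ n) (X : EdgeColoring n) (hX : IsOneFactorization X) :
    ∃ S : Finset (Fin n), S.card = k ∧ (k : ℤ) - 3 ≤ deficit X S := by
  classical
  have hn4 : 4 ≤ n := le_trans hk4 hkn
  have hpart := fun (c : Fin (n - 1)) (u : Fin n) =>
    partner_exists_unique (by omega) X hX c u
  set μ : Fin (n - 1) := ⟨0, by omega⟩ with hμ
  set ν : Fin (n - 1) := ⟨1, by omega⟩ with hν
  have hμν : μ ≠ ν := by simp [hμ, hν, Fin.ext_iff]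
  set f : Fin n → Fin n := fun u => (hpart μ u).exists.choose with hfdef
  set g : Fin n → Fin n := fun u => (hpart ν u).exists.choose with hgdef
  have hfspec : ∀ u, f u ≠ u ∧ X s(u, f u) = μ := fun u => (hpart μ u).exists.choose_spec
  have hgspec : ∀ u, g u ≠ u ∧ X s(u, g u) = ν := fun u => (hpart ν u).exists.choose_spec
  have hfuniq : ∀ u v, v ≠ u → X s(u, v) = μ → v = f u :=
    fun u v h1 h2 => (hpart μ u).unique ⟨h1, h2⟩ (hfspec u)
  have hguniq : ∀ u v, v ≠ u → X s(u, v) = ν → v = g u :=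
    fun u v h1 h2 => (hpart ν u).unique ⟨h1, h2⟩ (hgspec u)
  have hff : ∀ u, f (f u) = u := fun u =>
    (hfuniq (f u) u (Ne.symm (hfspec u).1) (by rw [Sym2.eq_swap]; exact (hfspec u).2)).symm
  have hgg : ∀ u, g (g u) = u := fun u =>
    (hguniq (g u) u (Ne.symm (hgspec u).1) (by rw [Sym2.eq_swap]; exact (hgspec u).2)).symm
  obtain ⟨S, hScard, hbd⟩ := exists_good_set f g hff hgg
    (fun x => (hfspec x).1) (fun x => (hgspec x).1) k (by omega) hkn
  refine ⟨S, hScard, ?_⟩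
  -- counting
  have hcolf : ∀ x, X s(x, f x) = μ := fun x => (hfspec x).2
  have hcolg : ∀ x, X s(x, g x) = ν := fun x => (hgspec x).2
  have h2mf := two_mul_fiber X S μ f (fun x => (hfspec x).1) hcolf
  have h2mg := two_mul_fiber X S ν g (fun x => (hgspec x).1) hcolg
  have hsplitf := Finset.card_filter_add_card_filter_not
    (s := S) (p := fun x => f x ∈ S)
  have hsplitg := Finset.card_filter_add_card_filter_not
    (s := S) (p := fun x => g x ∈ S)
  have hgamma := gamma_bound X S μ ν hμν
  have hedges := edgesIn_card_le S
  rw [hScard] at hedges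
  -- put everything together
  have hmain : gammaColors X S + k ≤ k.choose 2 + 3 := by
    simp only [hScard] at hsplitf hsplitg
    omega
  have hfin : (gammaColors X S : ℤ) + k ≤ (k.choose 2 : ℤ) + 3 := by exact_mod_cast hmain
  rw [deficit, hScard]
  omega
end
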